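/- Let κ be an infinite cardinal and B a complete Boolean algebra. The Stone space St(B) is not a κ-meager subset of itself if and only if the forcing axiom FA_κ(B) holds. -/

import Mathlib

open Classical

/-- An ultrafilter on a Boolean algebra `B`, viewed as a subset of `B`:
upward closed, closed under meets, omitting `⊥`, and containing exactly one of
`b`, `bᶜ` for every `b`. -/
def IsUltra {B : Type*} [BooleanAlgebra B] (G : Set B) : Prop :=
  (∀ a b : B, a ∈ G → a ≤ b → b ∈ G) ∧
  (∀ a b : B, a ∈ G → b ∈ G → a ⊓ b ∈ G) ∧
  (⊥ : B) ∉ G ∧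
  ∀ b : B, (b ∈ G ∨ bᶜ ∈ G) ∧ ¬(b ∈ G ∧ bᶜ ∈ G)

/-- The Stone space of a Boolean algebra: the set of its ultrafilters. -/
def StoneSp (B : Type*) [BooleanAlgebra B] : Type _ :=
  {G : Set B // IsUltra G}

/-- The basic (cl)open set `O_b` of the Stone space. -/
def basicOpen {B : Type*} [BooleanAlgebra B] (b : B) : Set (StoneSp B) :=
  {G : StoneSp B | b ∈ G.1}

/-- The Stone topology, generated by the sets `O_b`. -/
instance {B : Type*} [BooleanAlgebra B] : TopologicalSpace (StoneSp B) :=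
  TopologicalSpace.generateFrom {S : Set (StoneSp B) | ∃ b : B, S = basicOpen b}

/-- A set is `κ`-meager if it is a union of `κ`-many nowhere dense sets. -/
def KMeager (κ : Type*) {X : Type*} [TopologicalSpace X] (A : Set X) : Prop :=
  ∃ F : κ → Set X, (∀ i, IsNowhereDense (F i)) ∧ A = ⋃ i, F i

/-- A set has the `κ`-Baire property if it differs from an open set by a
`κ`-meager set. -/
def KBaireProperty (κ : Type*) {X : Type*} [TopologicalSpace X] (A : Set X) : Prop :=
  ∃ U : Set X, IsOpen U ∧ KMeager κ (symmDiff A U)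

/-- `D` is a dense subset of the poset `P`. -/
def DenseIn {P : Type*} [Preorder P] (D : Set P) : Prop :=
  ∀ p : P, ∃ d ∈ D, d ≤ p

/-- The forcing axiom `FA_κ(P)`: every κ-indexed family of dense subsets of `P`
admits a filter meeting all of them. -/
def ForcingAxiom (κ P : Type*) [Preorder P] : Prop :=
  ∀ D : κ → Set P, (∀ i, DenseIn (D i)) →
    ∃ g : Order.PFilter P, ∀ i, ∃ p ∈ g, p ∈ D i

/-- a proper filter -/
def IsPropFilter {B : Type*} [BooleanAlgebra B] (S : Set B) : Prop :=
  (∀ a b : B, a ∈ S → a ≤ b → b ∈ S) ∧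
  (∀ a b : B, a ∈ S → b ∈ S → a ⊓ b ∈ S) ∧
  (⊥ : B) ∉ S ∧ S.Nonempty

lemma exists_ultra {B : Type*} [BooleanAlgebra B] {F : Set B} (hF : IsPropFilter F) :
    ∃ G : Set B, IsUltra G ∧ F ⊆ G := by
  obtain ⟨M, hFM, hM, hmax⟩ := zorn_subset_nonempty {S : Set B | IsPropFilter S}
    (fun c hc hchain hne => by
      refine ⟨⋃₀ c, ⟨?_, ?_, ?_, ?_⟩, fun s hs => Set.subset_sUnion_of_mem hs⟩
      · rintro a b ⟨s, hs, ha⟩ hab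
        exact ⟨s, hs, (hc hs).1 a b ha hab⟩
      · rintro a b ⟨s, hs, ha⟩ ⟨t, ht, hb⟩
        rcases hchain.total hs ht with h | h
        · exact ⟨t, ht, (hc ht).2.1 a b (h ha) hb⟩
        · exact ⟨s, hs, (hc hs).2.1 a b ha (h hb)⟩
      · rintro ⟨s, hs, hbot⟩
        exact (hc hs).2.2.1 hbot
      · obtain ⟨s, hs⟩ := hne
        obtain ⟨x, hx⟩ := (hc hs).2.2.2
        exact ⟨x, s, hs, hx⟩) F hF
  obtain ⟨hMup, hMinf, hMbot, hMne⟩ := hM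
  refine ⟨M, ⟨hMup, hMinf, hMbot, fun b => ⟨?_, ?_⟩⟩, hFM⟩
  · by_cases hbc : bᶜ ∈ M
    · exact Or.inr hbc
    left
    -- every a ∈ M has a ⊓ b ≠ ⊥
    have key : ∀ a ∈ M, a ⊓ b ≠ ⊥ := by
      intro a ha h
      exact hbc (hMup a bᶜ ha (le_compl_iff_disjoint_right.2 (disjoint_iff.2 h)))
    set M' : Set B := {x | ∃ a ∈ M, a ⊓ b ≤ x} with hM'def
    have hMM' : M ⊆ M' := fun a ha => ⟨a, ha, inf_le_left⟩
    have hM' : IsPropFilter M' := by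
      refine ⟨?_, ?_, ?_, ?_⟩
      · rintro x y ⟨a, ha, hax⟩ hxy
        exact ⟨a, ha, hax.trans hxy⟩
      · rintro x y ⟨a, ha, hax⟩ ⟨a', ha', hay⟩
        refine ⟨a ⊓ a', hMinf a a' ha ha', ?_⟩
        have : (a ⊓ a') ⊓ b ≤ (a ⊓ b) ⊓ (a' ⊓ b) := by
          simp only [le_inf_iff]
          exact ⟨⟨inf_le_left.trans inf_le_left, inf_le_right⟩,
            ⟨inf_le_left.trans inf_le_right, inf_le_right⟩⟩
        exact this.trans (inf_le_inf hax hay)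
      · rintro ⟨a, ha, hax⟩
        exact key a ha (le_bot_iff.1 hax)
      · obtain ⟨a, ha⟩ := hMne
        exact ⟨a, hMM' ha⟩
    have : M' = M := le_antisymm (hmax hM' hMM') hMM'
    have hbM' : b ∈ M' := by
      obtain ⟨a, ha⟩ := hMne
      exact ⟨a, ha, inf_le_right⟩
    rw [this] at hbM'; exact hbM'
  · rintro ⟨hb, hbc⟩
    exact hMbot (by simpa [inf_compl_eq_bot] using hMinf b bᶜ hb hbc)

lemma ultra_top {B : Type*} [BooleanAlgebra B] (G : StoneSp B) : (⊤ : B) ∈ G.1 := by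
  rcases (G.2.2.2.2 ⊥).1 with h | h
  · exact absurd h G.2.2.2.1
  · simpa using h

lemma basicOpen_inter {B : Type*} [BooleanAlgebra B] (a b : B) :
    basicOpen a ∩ basicOpen b = basicOpen (a ⊓ b) := by
  ext G
  constructor
  · rintro ⟨ha, hb⟩; exact G.2.2.1 a b ha hb
  · intro h
    exact ⟨G.2.1 _ a h inf_le_left, G.2.1 _ b h inf_le_right⟩

lemma stone_basis {B : Type*} [BooleanAlgebra B] :
    TopologicalSpace.IsTopologicalBasis {S : Set (StoneSp B) | ∃ b : B, S = basicOpen b} := by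
  refine ⟨?_, ?_, rfl⟩
  · rintro t₁ ⟨a, rfl⟩ t₂ ⟨b, rfl⟩ G hG
    exact ⟨basicOpen (a ⊓ b), ⟨a ⊓ b, rfl⟩, by rw [← basicOpen_inter]; exact hG,
      by rw [← basicOpen_inter]⟩
  · apply Set.eq_univ_of_forall
    intro G
    exact ⟨basicOpen ⊤, ⟨⊤, rfl⟩, ultra_top G⟩

lemma basicOpen_isOpen {B : Type*} [BooleanAlgebra B] (b : B) : IsOpen (basicOpen b) :=
  stone_basis.isOpen ⟨b, rfl⟩

lemma basicOpen_nonempty {B : Type*} [BooleanAlgebra B] {b : B} (hb : b ≠ ⊥) :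
    (basicOpen b).Nonempty := by
  obtain ⟨G, hG, hsub⟩ := exists_ultra (F := {x : B | b ≤ x})
    ⟨fun a c ha hac => ha.trans hac, fun a c ha hc => le_inf ha hc,
      fun h => hb (le_bot_iff.1 h), ⟨b, le_refl b⟩⟩
  exact ⟨⟨G, hG⟩, hsub (le_refl b)⟩

/-- `St(B)` is not κ-meager in itself iff `FA_κ(B)` holds
(where `FA_κ(B)` is the forcing axiom for the poset `B \ {0}`). -/
theorem statement5 {κ B : Type*} [Infinite κ] [CompleteBooleanAlgebra B] :
    ¬ KMeager κ (Set.univ : Set (StoneSp B)) ↔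
      ForcingAxiom κ {b : B // b ≠ ⊥} := by
  constructor
  · -- not meager → forcing axiom
    intro h D hD
    by_contra hno
    apply h
    refine ⟨fun i => (⋃ d ∈ D i, basicOpen (d : {b : B // b ≠ ⊥}).1)ᶜ, fun i => ?_, ?_⟩
    · have hcl : IsClosed (⋃ d ∈ D i, basicOpen (d : {b : B // b ≠ ⊥}).1)ᶜ :=
        (isOpen_biUnion fun d _ => basicOpen_isOpen _).isClosed_compl
      rw [hcl.isNowhereDense_iff]
      by_contra hne
      obtain ⟨G, hG⟩ := Set.nonempty_iff_ne_empty.2 hne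
      obtain ⟨v, ⟨b, rfl⟩, hGv, hv⟩ :=
        stone_basis.isOpen_iff.1 isOpen_interior G hG
      have hb : b ≠ ⊥ := fun hbot => G.2.2.2.1 (hbot ▸ hGv)
      obtain ⟨d, hd, hdb⟩ := hD i ⟨b, hb⟩
      obtain ⟨H, hH⟩ := basicOpen_nonempty d.2
      have hHb : H ∈ basicOpen b := H.2.1 d.1 b hH hdb
      have : H ∈ (⋃ d ∈ D i, basicOpen (d : {b : B // b ≠ ⊥}).1)ᶜ :=
        interior_subset (hv hHb)
      exact this (Set.mem_biUnion hd hH)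
    · symm
      apply Set.eq_univ_of_forall
      intro G
      by_contra hG
      have hG' : ∀ i, G ∈ ⋃ d ∈ D i, basicOpen (d : {b : B // b ≠ ⊥}).1 := by
        intro i
        by_contra hGi
        exact hG (Set.mem_iUnion.2 ⟨i, hGi⟩)
      -- G meets every D i; build a filter
      have hpf : Order.IsPFilter {p : {b : B // b ≠ ⊥} | p.1 ∈ G.1} := by
        apply Order.IsPFilter.of_def
        · obtain ⟨d, hd⟩ := Set.mem_iUnion₂.1 (hG' (Classical.arbitrary κ))
          exact ⟨d, hd.2⟩
        · rintro p hp q hq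
          have hpq : p.1 ⊓ q.1 ∈ G.1 := G.2.2.1 _ _ hp hq
          have hne : p.1 ⊓ q.1 ≠ ⊥ := fun hbot => G.2.2.2.1 (hbot ▸ hpq)
          exact ⟨⟨p.1 ⊓ q.1, hne⟩, hpq, Subtype.mk_le_mk.2 inf_le_left,
            Subtype.mk_le_mk.2 inf_le_right⟩
        · intro x y hxy hx
          exact G.2.1 x.1 y.1 hx (Subtype.coe_le_coe.2 hxy)
      refine hno ⟨hpf.toPFilter, fun i => ?_⟩
      obtain ⟨d, hdD, hdG⟩ := Set.mem_iUnion₂.1 (hG' i)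
      exact ⟨d, hdG, hdD⟩
  · -- forcing axiom → not meager
    rintro fa ⟨F, hnwd, hunion⟩
    set D : κ → Set {b : B // b ≠ ⊥} :=
      fun i => {d | basicOpen d.1 ∩ closure (F i) = ∅} with hDdef
    have hdense : ∀ i, DenseIn (D i) := by
      intro i p
      have hop : (basicOpen p.1).Nonempty := basicOpen_nonempty p.2
      have hnot : ¬ basicOpen p.1 ⊆ closure (F i) := by
        intro hsub
        have : basicOpen p.1 ⊆ interior (closure (F i)) :=
          (basicOpen_isOpen p.1).subset_interior_iff.2 hsub
        rw [hnwd i] at this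
        exact hop.ne_empty (Set.subset_empty_iff.1 this)
      obtain ⟨G, hGb, hGc⟩ := Set.not_subset.1 hnot
      obtain ⟨v, ⟨c, rfl⟩, hGv, hv⟩ :=
        stone_basis.isOpen_iff.1 isClosed_closure.isOpen_compl G hGc
      have hcp : c ⊓ p.1 ∈ G.1 := G.2.2.1 _ _ hGv hGb
      have hne : c ⊓ p.1 ≠ ⊥ := fun hbot => G.2.2.2.1 (hbot ▸ hcp)
      refine ⟨⟨c ⊓ p.1, hne⟩, ?_, Subtype.mk_le_mk.2 inf_le_right⟩
      rw [hDdef]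
      simp only [Set.mem_setOf_eq]
      apply Set.eq_empty_of_forall_notMem
      rintro H ⟨hH1, hH2⟩
      exact hv (H.2.1 _ c hH1 inf_le_left) hH2
    obtain ⟨g, hg⟩ := fa D hdense
    -- build ultrafilter extending the filter generated by g
    have hpf : IsPropFilter {a : B | ∃ p : {b : B // b ≠ ⊥}, p ∈ g ∧ p.1 ≤ a} := by
      refine ⟨?_, ?_, ?_, ?_⟩
      · rintro a b ⟨p, hp, hpa⟩ hab
        exact ⟨p, hp, hpa.trans hab⟩
      · rintro a b ⟨p, hp, hpa⟩ ⟨q, hq, hqb⟩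
        obtain ⟨r, hr, hrp, hrq⟩ := g.directed p hp q hq
        exact ⟨r, hr, le_inf ((Subtype.coe_le_coe.2 hrp).trans hpa)
          ((Subtype.coe_le_coe.2 hrq).trans hqb)⟩
      · rintro ⟨p, hp, hpa⟩
        exact p.2 (le_bot_iff.1 hpa)
      · obtain ⟨p, hp⟩ := g.nonempty
        exact ⟨p.1, p, hp, le_refl _⟩
    obtain ⟨G, hG, hsub⟩ := exists_ultra hpf
    have : (⟨G, hG⟩ : StoneSp B) ∈ (Set.univ : Set (StoneSp B)) := Set.mem_univ _
    rw [hunion] at this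
    obtain ⟨i, hi⟩ := Set.mem_iUnion.1 this
    obtain ⟨p, hpg, hpD⟩ := hg i
    have hpG : p.1 ∈ G := hsub ⟨p, hpg, le_refl _⟩
    have : (⟨G, hG⟩ : StoneSp B) ∈ basicOpen p.1 ∩ closure (F i) :=
      ⟨hpG, subset_closure hi⟩
    rw [hpD] at this
    exact this
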